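/- Assume d ≤ 2, i.e., (α,α)/(β,β) ≤ 2 for all α, β ∈ Δ, and set Q₁^∨ = Σ_{α ∈ Δ, α short} ℤ α^∨. Then the quotient group (Q₁^∨ + 2Q^∨)/2Q^∨ is an elementary abelian 2-group of order 2^{|Π ∩ Δ_short|}, where |Π ∩ Δ_short| is the number of short simple roots. -/

import Mathlib

open scoped Pointwise

namespace ZetaCenter

variable {V : Type*} [AddCommGroup V] [Module ℚ V]

/-- The coroot `α^∨ = 2α/(α,α)` of a vector `α` with respect to a bilinear form. -/
noncomputable def coroot (B : V →ₗ[ℚ] V →ₗ[ℚ] ℚ) (α : V) : V :=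
  (2 / B α α) • α

/-- `Δ` is a (crystallographic-style) root system in `V` with respect to `B`:
finite, not containing `0`, spanning `V`, and closed under the reflections `s_α`. -/
def IsRootSystem (B : V →ₗ[ℚ] V →ₗ[ℚ] ℚ) (Δ : Set V) : Prop :=
  Δ.Finite ∧ (0 : V) ∉ Δ ∧ Submodule.span ℚ Δ = ⊤ ∧
    ∀ α ∈ Δ, ∀ β ∈ Δ, β - B β (coroot B α) • α ∈ Δ

/-- Crystallographic condition: all pairings `(β, α^∨)` are integers. -/
def IsCrystallographic (B : V →ₗ[ℚ] V →ₗ[ℚ] ℚ) (Δ : Set V) : Prop :=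
  ∀ α ∈ Δ, ∀ β ∈ Δ, ∃ n : ℤ, B β (coroot B α) = n

/-- Reducedness: the only multiples of a root that are roots are `±` itself. -/
def IsReduced (Δ : Set V) : Prop :=
  ∀ α ∈ Δ, ∀ c : ℚ, c • α ∈ Δ → c = 1 ∨ c = -1

/-- Irreducibility: `Δ` admits no decomposition into two orthogonal nonempty parts. -/
def IsIrreducible (B : V →ₗ[ℚ] V →ₗ[ℚ] ℚ) (Δ : Set V) : Prop :=
  Δ.Nonempty ∧ ∀ Δ₁ Δ₂ : Set V, Δ = Δ₁ ∪ Δ₂ →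
    (∀ α ∈ Δ₁, ∀ β ∈ Δ₂, B α β = 0) → Δ₁ = ∅ ∨ Δ₂ = ∅

/-- The Weyl group of `Δ`: the subgroup of `GL(V)` generated by the reflections `s_α`, `α ∈ Δ`. -/
def weylGroup (B : V →ₗ[ℚ] V →ₗ[ℚ] ℚ) (Δ : Set V) : Subgroup (V ≃ₗ[ℚ] V) :=
  Subgroup.closure {w | ∃ α ∈ Δ, ∀ v : V, w v = v - B v (coroot B α) • α}

/-- `Pi` is a base (set of simple roots) of `Δ`: a linearly independent subset such that every
root is a nonnegative-integral or nonpositive-integral combination of elements of `Pi`. -/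
def IsBase (Δ Pi : Set V) : Prop :=
  Pi ⊆ Δ ∧ LinearIndependent ℚ ((↑) : Pi → V) ∧
    ∀ α ∈ Δ, α ∈ AddSubmonoid.closure Pi ∨ -α ∈ AddSubmonoid.closure Pi

/-- The positive system corresponding to the base `Pi`. -/
def positiveRoots (Δ Pi : Set V) : Set V :=
  {α | α ∈ Δ ∧ α ∈ AddSubmonoid.closure Pi}

/-- `β` is a short root of `Δ`. -/
def IsShort (B : V →ₗ[ℚ] V →ₗ[ℚ] ℚ) (Δ : Set V) (β : V) : Prop :=
  β ∈ Δ ∧ ∀ γ ∈ Δ, B β β ≤ B γ γ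

/-- The lattice `{λ ∈ V : (λ, α^∨) ∈ c(α)·ℤ for all α ∈ Δ}`. -/
noncomputable def scaledWeightLattice (B : V →ₗ[ℚ] V →ₗ[ℚ] ℚ) (Δ : Set V) (c : V → ℚ) :
    AddSubgroup V where
  carrier := {lam | ∀ α ∈ Δ, ∃ n : ℤ, B lam (coroot B α) = c α * n}
  zero_mem' := fun α _ => ⟨0, by simp⟩
  add_mem' := by
    intro x y hx hy α hα
    obtain ⟨m, hm⟩ := hx α hα
    obtain ⟨k, hk⟩ := hy α hα
    exact ⟨m + k, by rw [map_add, LinearMap.add_apply, hm, hk]; push_cast; ring⟩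
  neg_mem' := by
    intro x hx α hα
    obtain ⟨m, hm⟩ := hx α hα
    exact ⟨-m, by rw [map_neg, LinearMap.neg_apply, hm]; push_cast; ring⟩

/-- The weight lattice `P` of `Δ`. -/
noncomputable def weightLattice (B : V →ₗ[ℚ] V →ₗ[ℚ] ℚ) (Δ : Set V) : AddSubgroup V :=
  scaledWeightLattice B Δ fun _ => 1

/-- The coroot lattice `Q^∨` of `Δ`. -/
noncomputable def corootLattice (B : V →ₗ[ℚ] V →ₗ[ℚ] ℚ) (Δ : Set V) : AddSubgroup V :=
  AddSubgroup.closure (coroot B '' Δ)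



section Aux1

variable (B : V →ₗ[ℚ] V →ₗ[ℚ] ℚ)

lemma B_coroot_eq (x α : V) : B x (coroot B α) = 2 / B α α * B x α := by
  simp [coroot, map_smul, smul_eq_mul]

lemma coroot_self {α : V} (hα : B α α ≠ 0) : B α (coroot B α) = 2 := by
  rw [B_coroot_eq]; field_simp

lemma B_reflect_reflect (hsymm : ∀ x y : V, B x y = B y x) {a : V} (ha : B a a ≠ 0)
    (x y : V) :
    B (x - B x (coroot B a) • a) (y - B y (coroot B a) • a) = B x y := by
  have h2 : B a y = B y a := hsymm a y
  simp only [map_sub, map_smul, LinearMap.sub_apply, LinearMap.smul_apply,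
    smul_eq_mul, B_coroot_eq]
  rw [h2]
  field_simp
  ring

lemma coroot_neg (α : V) : coroot B (-α) = - coroot B α := by
  simp [coroot]

lemma coroot_coroot {α : V} (hα : B α α ≠ 0) : coroot B (coroot B α) = α := by
  have h4 : B (coroot B α) (coroot B α) = 4 / B α α := by
    simp only [coroot, map_smul, LinearMap.smul_apply, smul_eq_mul, smul_smul]
    field_simp; ring
  rw [coroot, h4, coroot, smul_smul]
  have : 2 / (4 / B α α) * (2 / B α α) = 1 := by field_simp; ring
  rw [this, one_smul]

lemma coroot_reflect (hsymm : ∀ x y : V, B x y = B y x) {a γ : V} (ha : B a a ≠ 0)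
    (hg : B γ γ ≠ 0) :
    coroot B (γ - B γ (coroot B a) • a)
      = coroot B γ - (B a (coroot B γ)) • coroot B a := by
  have hrr := B_reflect_reflect B hsymm ha γ γ
  rw [coroot, hrr]
  simp only [coroot, B_coroot_eq, smul_sub, smul_smul, map_smul, LinearMap.smul_apply,
    smul_eq_mul]
  congr 1
  rw [hsymm a γ]
  ring

end Aux1

section Aux2

variable (B : V →ₗ[ℚ] V →ₗ[ℚ] ℚ)

lemma length_ratio {Δ : Set V} (hsymm : ∀ x y : V, B x y = B y x)
    (hpos : ∀ v : V, v ≠ 0 → 0 < B v v) (h0 : (0 : V) ∉ Δ)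
    (hred : IsReduced Δ) (hcrys : IsCrystallographic B Δ)
    (hd2 : ∀ α ∈ Δ, ∀ β ∈ Δ, B α α ≤ 2 * B β β)
    {α β : V} (hα : α ∈ Δ) (hβ : β ∈ Δ) :
    B α β = 0 ∨ B α α = B β β ∨ B α α = 2 * B β β ∨ B β β = 2 * B α α := by
  by_cases hob : B α β = 0
  · exact Or.inl hob
  right
  have hαne : α ≠ 0 := fun h => h0 (h ▸ hα)
  have hβne : β ≠ 0 := fun h => h0 (h ▸ hβ)
  have hBα : 0 < B α α := hpos α hαne
  have hBβ : 0 < B β β := hpos β hβne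
  obtain ⟨n, hn⟩ := hcrys α hα β hβ
  obtain ⟨m, hm⟩ := hcrys β hβ α hα
  rw [B_coroot_eq] at hn hm
  have hba : B β α = B α β := hsymm β α
  rw [hba] at hn
  have key1 : (n : ℚ) * B α α = 2 * B α β := by
    rw [← hn]; field_simp
  have key2 : (m : ℚ) * B β β = 2 * B α β := by
    rw [← hm]; field_simp
  have hda : B α α ≤ 2 * B β β := hd2 α hα β hβ
  have hdb : B β β ≤ 2 * B α α := hd2 β hβ α hα
  set t := B α β / B β β with ht
  by_cases hv : α - t • β = 0
  · left
    have hαt : t • β = α := by rwa [sub_eq_zero, eq_comm] at hv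
    have h2 : B α α = t * t * B β β := by
      rw [← hαt]; simp only [map_smul, LinearMap.smul_apply, smul_eq_mul]; ring
    rcases hred β hβ t (hαt.symm ▸ hα) with h1 | h1 <;> rw [h1] at h2 <;> linarith
  · have hvv : 0 < B (α - t • β) (α - t • β) := hpos _ hv
    have hexp : B (α - t • β) (α - t • β) = B α α - (B α β)^2 / B β β := by
      simp only [map_sub, map_smul, LinearMap.sub_apply, LinearMap.smul_apply,
        smul_eq_mul, ht, hba]
      field_simp
      ring
    have hcs : 4 * (B α β)^2 < 4 * (B α α * B β β) := by
      rw [hexp] at hvv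
      have := (div_lt_iff₀ hBβ).mp (by linarith : (B α β)^2 / B β β < B α α)
      nlinarith
    have hprod : (n : ℚ) * m * (B α α * B β β) = 4 * B α β ^ 2 := by
      have h := congrArg₂ (· * ·) key1 key2
      linear_combination h
    have h4 : (n : ℚ) * m < 4 := by
      have hpp : 0 < B α α * B β β := mul_pos hBα hBβ
      nlinarith
    have h1 : 0 < (n : ℚ) * m := by
      have : 0 < 4 * B α β ^ 2 := by positivity
      have hpp : 0 < B α α * B β β := mul_pos hBα hBβ
      nlinarith
    have h4' : n * m < 4 := by exact_mod_cast h4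
    have h1' : 0 < n * m := by exact_mod_cast h1
    have hn0 : n ≠ 0 := by rintro rfl; simp at h1'
    have main : ∀ a b : ℤ, 0 < a → 0 < b → a * b < 4 → (a : ℚ) * B α α = (b : ℚ) * B β β →
        B α α = B β β ∨ B α α = 2 * B β β ∨ B β β = 2 * B α α := by
      intro a b ha hb hab h
      have ha3 : a ≤ 3 := by nlinarith
      have hb3 : b ≤ 3 := by nlinarith
      interval_cases a <;> interval_cases b <;> push_cast at h <;>
        first
          | omega
          | (left; linarith)
          | (right; left; linarith)
          | (right; right; linarith)
          | (exfalso; linarith)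
    rcases lt_or_gt_of_ne hn0 with hneg | hposn
    · have hmneg : m < 0 := by nlinarith
      refine main (-n) (-m) (by omega) (by omega) (by nlinarith) ?_
      push_cast
      linarith
    · have hmpos : 0 < m := by nlinarith
      exact main n m hposn hmpos h4' (by linarith)

lemma two_lengths {Δ : Set V} (hsymm : ∀ x y : V, B x y = B y x)
    (hpos : ∀ v : V, v ≠ 0 → 0 < B v v) (h0 : (0 : V) ∉ Δ)
    (hred : IsReduced Δ) (hcrys : IsCrystallographic B Δ) (hirr : IsIrreducible B Δ)
    (hd2 : ∀ α ∈ Δ, ∀ β ∈ Δ, B α α ≤ 2 * B β β)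
    {m₀ : ℚ} {γ₀ : V} (hγ₀ : γ₀ ∈ Δ) (hm : B γ₀ γ₀ = m₀)
    (hmin : ∀ γ ∈ Δ, m₀ ≤ B γ γ) :
    ∀ α ∈ Δ, B α α = m₀ ∨ B α α = 2 * m₀ := by
  have hm₀pos : 0 < m₀ := hm ▸ hpos γ₀ (fun h => h0 (h ▸ hγ₀))
  set Δ₁ : Set V := {γ | γ ∈ Δ ∧ (B γ γ = m₀ ∨ B γ γ = 2 * m₀)} with hΔ₁
  set Δ₂ : Set V := {γ | γ ∈ Δ ∧ ¬(B γ γ = m₀ ∨ B γ γ = 2 * m₀)} with hΔ₂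
  have hun : Δ = Δ₁ ∪ Δ₂ := by
    ext γ; simp only [hΔ₁, hΔ₂, Set.mem_union, Set.mem_setOf_eq]; tauto
  have horth : ∀ γ1 ∈ Δ₁, ∀ γ2 ∈ Δ₂, B γ1 γ2 = 0 := by
    rintro γ1 ⟨hγ1, hl1⟩ γ2 ⟨hγ2, hl2⟩
    by_contra hB
    apply hl2
    have hub : B γ2 γ2 ≤ 2 * m₀ := by
      have := hd2 γ2 hγ2 γ₀ hγ₀; linarith [hm ▸ this]
    have hlb : m₀ ≤ B γ2 γ2 := hmin γ2 hγ2
    rcases length_ratio B hsymm hpos h0 hred hcrys hd2 hγ1 hγ2 with h | h | h | h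
    · exact absurd h hB
    · rcases hl1 with h1 | h1 <;> rw [h1] at h <;> [left; right] <;> linarith
    · rcases hl1 with h1 | h1 <;> rw [h1] at h
      · exfalso; linarith
      · left; linarith
    · rcases hl1 with h1 | h1 <;> rw [h1] at h
      · right; linarith
      · exfalso; linarith
  rcases hirr.2 Δ₁ Δ₂ hun horth with h | h
  · exfalso
    have : γ₀ ∈ Δ₁ := ⟨hγ₀, Or.inl hm⟩
    rw [h] at this; exact this
  · intro α hα
    have : α ∈ Δ₁ ∪ Δ₂ := hun ▸ hα
    rcases this with h1 | h1
    · exact h1.2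
    · rw [h] at h1; exact absurd h1 (Set.notMem_empty α)

end Aux2


section Aux3

variable (B : V →ₗ[ℚ] V →ₗ[ℚ] ℚ) {Δ Pi : Set V}

lemma neg_mem_root (hpos : ∀ v : V, v ≠ 0 → 0 < B v v) (hRS : IsRootSystem B Δ)
    {α : V} (hα : α ∈ Δ) : -α ∈ Δ := by
  have h0 : (0 : V) ∉ Δ := hRS.2.1
  have hBαα : B α α ≠ 0 := ne_of_gt (hpos α (fun h => h0 (h ▸ hα)))
  have := hRS.2.2.2 α hα α hα
  rwa [coroot_self B hBαα, show α - (2 : ℚ) • α = -α by rw [two_smul]; abel] at this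

lemma root_induction (hsymm : ∀ x y : V, B x y = B y x)
    (hpos : ∀ v : V, v ≠ 0 → 0 < B v v) (hRS : IsRootSystem B Δ)
    (hred : IsReduced Δ) (hcrys : IsCrystallographic B Δ) (hbase : IsBase Δ Pi)
    (b : Module.Basis ↥Pi ℚ V) (hb : ∀ i : ↥Pi, b i = i.1)
    (p : V → Prop)
    (hPi : ∀ γ ∈ Pi, p γ)
    (hneg : ∀ γ ∈ Δ, p γ → p (-γ))
    (hrefl : ∀ γ ∈ Δ, ∀ j ∈ Pi, p γ → p (γ - B γ (coroot B j) • j)) :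
    ∀ α ∈ Δ, p α := by
  classical
  have h0 : (0 : V) ∉ Δ := hRS.2.1
  have hrootne : ∀ γ ∈ Δ, 0 < B γ γ := fun γ hγ => hpos γ (fun h => h0 (h ▸ hγ))
  have hNN : ∀ x ∈ AddSubmonoid.closure Pi, ∀ i : ↥Pi, ∃ k : ℕ, b.repr x i = k := by
    intro x hx
    induction hx using AddSubmonoid.closure_induction with
    | mem γ hγ =>
      intro i
      have hγb : γ = b ⟨γ, hγ⟩ := (hb ⟨γ, hγ⟩).symm
      rw [hγb, b.repr_self, Finsupp.single_apply]
      by_cases h : (⟨γ, hγ⟩ : ↥Pi) = i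
      · exact ⟨1, by rw [if_pos h]; norm_num⟩
      · exact ⟨0, by rw [if_neg h]; norm_num⟩
    | zero => intro i; exact ⟨0, by simp⟩
    | add x y hx hy ihx ihy =>
      intro i
      obtain ⟨k1, hk1⟩ := ihx i
      obtain ⟨k2, hk2⟩ := ihy i
      exact ⟨k1 + k2, by rw [map_add, Finsupp.add_apply, hk1, hk2]; push_cast; ring⟩
  have hsum1 : ∀ j : ↥Pi, b.sumCoords (b j) = 1 := by
    intro j
    rw [Module.Basis.coe_sumCoords]
    simp only [b.repr_self]
    rw [Finsupp.sum_single_index] <;> simp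
  have hSum : ∀ x ∈ AddSubmonoid.closure Pi, ∃ k : ℕ, b.sumCoords x = k := by
    intro x hx
    induction hx using AddSubmonoid.closure_induction with
    | mem γ hγ =>
      have hγb : γ = b ⟨γ, hγ⟩ := (hb ⟨γ, hγ⟩).symm
      exact ⟨1, by rw [hγb, hsum1]; norm_num⟩
    | zero => exact ⟨0, by simp⟩
    | add x y hx hy ihx ihy =>
      obtain ⟨k1, hk1⟩ := ihx
      obtain ⟨k2, hk2⟩ := ihy
      exact ⟨k1 + k2, by rw [map_add, hk1, hk2]; push_cast; ring⟩
  have key : ∀ k : ℕ, ∀ α, α ∈ Δ → α ∈ AddSubmonoid.closure Pi →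
      b.sumCoords α = k → p α := by
    intro k
    induction k using Nat.strong_induction_on with
    | _ k IH =>
    intro α hαΔ hαCl hk
    by_cases hαPi : α ∈ Pi
    · exact hPi α hαPi
    have hBαα : 0 < B α α := hrootne α hαΔ
    have hexp : B α α = (b.repr α).sum (fun i q => q * B α (b i)) := by
      have h2 := congrArg (B α) (b.linearCombination_repr α).symm
      rw [Finsupp.linearCombination_apply, map_finsuppSum] at h2
      rw [h2]
      simp [map_smul, smul_eq_mul]
    have hex : ∃ i ∈ (b.repr α).support, 0 < (b.repr α) i * B α (b i) := by
      by_contra hcon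
      push_neg at hcon
      have : (b.repr α).sum (fun i q => q * B α (b i)) ≤ 0 :=
        Finset.sum_nonpos (fun i hi => hcon i hi)
      rw [← hexp] at this
      linarith
    obtain ⟨i, hisupp, hipos⟩ := hex
    obtain ⟨a_i, hai⟩ := hNN α hαCl i
    have hanneg : (0 : ℚ) ≤ b.repr α i := by rw [hai]; positivity
    have h1 : 0 < b.repr α i := by
      rcases eq_or_lt_of_le hanneg with h | h
      · rw [← h] at hipos; simp at hipos
      · exact h
    have hBi : 0 < B α (b i) := by
      rcases mul_pos_iff.mp hipos with ⟨_, h⟩ | ⟨h, _⟩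
      · exact h
      · linarith
    have hjPi : (b i : V) ∈ Pi := by rw [hb i]; exact i.2
    have hjΔ : (b i : V) ∈ Δ := hbase.1 hjPi
    have hBjj : 0 < B (b i) (b i) := hrootne _ hjΔ
    have hc : 0 < B α (coroot B (b i)) := by
      rw [B_coroot_eq]; positivity
    obtain ⟨n, hn⟩ := hcrys (b i) hjΔ α hαΔ
    have hn1 : 1 ≤ n := by
      have : (0 : ℚ) < n := hn ▸ hc
      exact_mod_cast this
    set β := α - B α (coroot B (b i)) • (b i : V) with hβdef
    have hβΔ : β ∈ Δ := hRS.2.2.2 (b i) hjΔ α hαΔ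
    have hreprβ : ∀ l : ↥Pi, b.repr β l
        = b.repr α l - (if i = l then (n : ℚ) else 0) := by
      intro l
      rw [hβdef, map_sub, Finsupp.sub_apply, hn]
      congr 1
      rw [map_smul, b.repr_self, Finsupp.smul_apply, Finsupp.single_apply]
      by_cases h : i = l <;> simp [h]
    have hβCl : β ∈ AddSubmonoid.closure Pi := by
      rcases hbase.2.2 β hβΔ with h | hnegmem
      · exact h
      exfalso
      have hrepr_single : b.repr α = Finsupp.single i (b.repr α i) := by
        ext l
        rw [Finsupp.single_apply]
        by_cases h : i = l
        · rw [if_pos h, h]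
        · rw [if_neg h]
          obtain ⟨k1, hk1⟩ := hNN α hαCl l
          obtain ⟨k2, hk2⟩ := hNN _ hnegmem l
          rw [map_neg, Finsupp.neg_apply, hreprβ l, if_neg h, sub_zero] at hk2
          have hplus : (k1 : ℚ) + k2 = 0 := by rw [← hk1, ← hk2]; ring
          have hplus' : k1 + k2 = 0 := by exact_mod_cast hplus
          have hk10 : k1 = 0 := by omega
          rw [hk1, hk10]; norm_num
      have hαeq : α = b.repr α i • (b i : V) := by
        have h2 := b.linearCombination_repr α
        rw [hrepr_single, Finsupp.linearCombination_single] at h2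
        exact h2.symm
      rcases hred (b i) hjΔ (b.repr α i) (by rw [← hαeq]; exact hαΔ) with h1 | h1
      · have hbi : α = (b i : V) := by
          conv_lhs => rw [hαeq]
          rw [h1, one_smul]
        exact hαPi (hbi ▸ hjPi)
      · have hm1 : (-1 : ℚ) = (a_i : ℚ) := by rw [← h1, hai]
        have : (0 : ℚ) ≤ (a_i : ℚ) := by positivity
        linarith
    have hsumβ : b.sumCoords β = (k : ℚ) - n := by
      rw [hβdef, map_sub, map_smul, hk, hn, hsum1]
      simp
    obtain ⟨k', hk'⟩ := hSum β hβCl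
    have hkQ : (k' : ℚ) + n = k := by rw [hk'] at hsumβ; linarith
    have hkZ : (k' : ℤ) + n = k := by exact_mod_cast hkQ
    have hklt : k' < k := by omega
    have hpβ := IH k' hklt β hβΔ hβCl hk'
    have hBβcor : B β (coroot B (b i)) = -(B α (coroot B (b i))) := by
      rw [hβdef, map_sub, LinearMap.sub_apply, map_smul, LinearMap.smul_apply,
        smul_eq_mul, coroot_self B (ne_of_gt hBjj)]
      ring
    have hfin : β - B β (coroot B (b i)) • (b i : V) = α := by
      rw [hBβcor, hβdef, neg_smul, sub_neg_eq_add]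
      abel
    have := hrefl β hβΔ (b i) hjPi hpβ
    rwa [hfin] at this
  intro α hα
  rcases hbase.2.2 α hα with h | h
  · obtain ⟨k, hk⟩ := hSum α h
    exact key k α hα h hk
  · have hnegΔ : -α ∈ Δ := neg_mem_root B hpos hRS hα
    obtain ⟨k, hk⟩ := hSum (-α) h
    have := hneg (-α) hnegΔ (key k (-α) hnegΔ h hk)
    rwa [neg_neg] at this

end Aux3


section Aux4

variable (B : V →ₗ[ℚ] V →ₗ[ℚ] ℚ) {Δ Pi : Set V}

lemma coroot_coords (hsymm : ∀ x y : V, B x y = B y x)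
    (hpos : ∀ v : V, v ≠ 0 → 0 < B v v) (hRS : IsRootSystem B Δ)
    (hred : IsReduced Δ) (hcrys : IsCrystallographic B Δ) (hirr : IsIrreducible B Δ)
    (hbase : IsBase Δ Pi)
    (hd2 : ∀ α ∈ Δ, ∀ β ∈ Δ, B α α ≤ 2 * B β β)
    (b : Module.Basis ↥Pi ℚ V) (hb : ∀ i : ↥Pi, b i = i.1)
    (b' : Module.Basis ↥Pi ℚ V) (hb' : ∀ i : ↥Pi, b' i = coroot B (i.1 : V))
    {m₀ : ℚ} {γ₀ : V} (hγ₀ : γ₀ ∈ Δ) (hm : B γ₀ γ₀ = m₀)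
    (hmin : ∀ γ ∈ Δ, m₀ ≤ B γ γ) :
    ∀ α ∈ Δ, ∀ i : ↥Pi, ∃ n : ℤ, b'.repr (coroot B α) i = n ∧
      (B α α = m₀ → B (i : V) (i : V) ≠ m₀ → 2 ∣ n) := by
  classical
  have h0 : (0 : V) ∉ Δ := hRS.2.1
  have hrootne : ∀ γ ∈ Δ, 0 < B γ γ := fun γ hγ => hpos γ (fun h => h0 (h ▸ hγ))
  have hm₀pos : 0 < m₀ := hm ▸ hrootne γ₀ hγ₀
  have h2len := two_lengths B hsymm hpos h0 hred hcrys hirr hd2 hγ₀ hm hmin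
  apply root_induction B hsymm hpos hRS hred hcrys hbase b hb
  · -- simple roots
    intro γ hγ i
    have hcb : coroot B γ = b' ⟨γ, hγ⟩ := (hb' ⟨γ, hγ⟩).symm
    rw [hcb, b'.repr_self, Finsupp.single_apply]
    by_cases h : (⟨γ, hγ⟩ : ↥Pi) = i
    · refine ⟨1, by rw [if_pos h]; norm_num, ?_⟩
      intro hshort hlong
      exfalso
      subst h
      exact hlong hshort
    · exact ⟨0, by rw [if_neg h]; norm_num, fun _ _ => dvd_zero 2⟩
  · -- negation
    intro γ hγ hp i
    obtain ⟨n, hn, hpar⟩ := hp i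
    refine ⟨-n, ?_, ?_⟩
    · rw [coroot_neg, map_neg, Finsupp.neg_apply, hn]; push_cast; ring
    · intro hshort hlong
      have hγs : B γ γ = m₀ := by
        rw [← hshort]; simp
      exact dvd_neg.mpr (hpar hγs hlong)
  · -- reflection
    intro γ hγ j hj hp i
    have hjΔ : j ∈ Δ := hbase.1 hj
    have hBjj : 0 < B j j := hrootne j hjΔ
    have hBγγ : 0 < B γ γ := hrootne γ hγ
    rw [coroot_reflect B hsymm (ne_of_gt hBjj) (ne_of_gt hBγγ)]
    obtain ⟨nj, hnj⟩ := hcrys γ hγ j hjΔ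
    have hbj : coroot B j = b' ⟨j, hj⟩ := (hb' ⟨j, hj⟩).symm
    obtain ⟨n, hn, hpar⟩ := hp i
    refine ⟨n - (if (⟨j, hj⟩ : ↥Pi) = i then nj else 0), ?_, ?_⟩
    · rw [map_sub, Finsupp.sub_apply, hn, hnj, hbj, map_smul, b'.repr_self,
        Finsupp.smul_apply, Finsupp.single_apply]
      by_cases h : (⟨j, hj⟩ : ↥Pi) = i <;> simp [h]
    · intro hshort hlong
      have hlen := B_reflect_reflect B hsymm (ne_of_gt hBjj) γ γ
      have hγs : B γ γ = m₀ := by rw [← hlen]; exact hshort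
      have h2 := hpar hγs hlong
      by_cases hji : (⟨j, hj⟩ : ↥Pi) = i
      · rw [if_pos hji]
        have hij : (i : V) = j := by rw [← hji]
        have hjlong : B j j ≠ m₀ := by rw [← hij]; exact hlong
        have hj2m : B j j = 2 * m₀ := (h2len j hjΔ).resolve_left hjlong
        obtain ⟨n', hn'⟩ := hcrys j hjΔ γ hγ
        have hnj2 : (nj : ℚ) = 2 * n' := by
          rw [← hnj, ← hn', B_coroot_eq, B_coroot_eq, hγs, hj2m, hsymm j γ]
          field_simp
        have hnj2' : nj = 2 * n' := by exact_mod_cast hnj2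
        omega
      · rw [if_neg hji, sub_zero]
        exact h2

end Aux4


/-- Assuming `d ≤ 2`, the quotient `(Q₁^∨ + 2Q^∨)/2Q^∨` is an elementary
abelian 2-group of order `2 ^ |Pi ∩ Δ_short|`. -/
theorem statement5
    {V : Type*} [AddCommGroup V] [Module ℚ V] [FiniteDimensional ℚ V]
    (B : V →ₗ[ℚ] V →ₗ[ℚ] ℚ)
    (hsymm : ∀ x y : V, B x y = B y x)
    (hpos : ∀ v : V, v ≠ 0 → 0 < B v v)
    (Δ : Set V) (hRS : IsRootSystem B Δ) (hred : IsReduced Δ)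
    (hcrys : IsCrystallographic B Δ) (hirr : IsIrreducible B Δ)
    (Pi : Set V) (hbase : IsBase Δ Pi)
    (hd2 : ∀ α ∈ Δ, ∀ β ∈ Δ, B α α ≤ 2 * B β β) :
    (∀ x ∈ AddSubgroup.closure (coroot B '' {β | IsShort B Δ β}) ⊔
        (2 : ℚ) • corootLattice B Δ,
      x + x ∈ (2 : ℚ) • corootLattice B Δ) ∧
    ((2 : ℚ) • corootLattice B Δ).relIndex
        (AddSubgroup.closure (coroot B '' {β | IsShort B Δ β}) ⊔
          (2 : ℚ) • corootLattice B Δ) =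
      2 ^ (Pi ∩ {β | IsShort B Δ β}).ncard := by
  classical
  have h0 : (0 : V) ∉ Δ := hRS.2.1
  have hrootpos : ∀ γ ∈ Δ, 0 < B γ γ := fun γ hγ => hpos γ (fun h => h0 (h ▸ hγ))
  obtain ⟨γ₀, hγ₀, hmin⟩ := Set.exists_min_image Δ (fun γ => B γ γ) hRS.1 hirr.1
  set m₀ := B γ₀ γ₀ with hm₀def
  have hm : B γ₀ γ₀ = m₀ := rfl
  have hm₀pos : 0 < m₀ := hrootpos γ₀ hγ₀
  have hshort_iff : ∀ β, IsShort B Δ β ↔ β ∈ Δ ∧ B β β = m₀ := by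
    intro β
    constructor
    · rintro ⟨h1, h2⟩
      exact ⟨h1, le_antisymm (h2 γ₀ hγ₀) (hmin β h1)⟩
    · rintro ⟨h1, h2⟩
      refine ⟨h1, fun γ hγ => ?_⟩
      rw [h2]; exact hmin γ hγ
  -- the simple roots form a basis
  have hΔsub : Δ ⊆ (Submodule.span ℚ Pi : Set V) := by
    intro α hα
    have hcl : AddSubmonoid.closure Pi ≤ (Submodule.span ℚ Pi).toAddSubmonoid :=
      AddSubmonoid.closure_le.mpr Submodule.subset_span
    rcases hbase.2.2 α hα with h | h
    · exact hcl h
    · have h2 : -α ∈ Submodule.span ℚ Pi := hcl h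
      simpa using neg_mem h2
  have hPiSpan : ⊤ ≤ Submodule.span ℚ (Set.range ((↑) : Pi → V)) := by
    rw [Subtype.range_coe]
    calc (⊤ : Submodule ℚ V) = Submodule.span ℚ Δ := hRS.2.2.1.symm
      _ ≤ Submodule.span ℚ Pi := Submodule.span_le.mpr hΔsub
  set b : Module.Basis ↥Pi ℚ V := Module.Basis.mk hbase.2.1 hPiSpan with hbdef
  have hb : ∀ i : ↥Pi, b i = i.1 := fun i => by rw [hbdef, Module.Basis.mk_apply]
  have hPiΔ : ∀ i : ↥Pi, (i : V) ∈ Δ := fun i => hbase.1 i.2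
  have hBiipos : ∀ i : ↥Pi, 0 < B i.1 i.1 := fun i => hrootpos _ (hPiΔ i)
  set u : ↥Pi → ℚˣ := fun i =>
    Units.mk0 (2 / B i.1 i.1) (div_ne_zero two_ne_zero (ne_of_gt (hBiipos i))) with hudef
  set b' : Module.Basis ↥Pi ℚ V := b.unitsSMul u with hb'def
  have hb' : ∀ i : ↥Pi, b' i = coroot B (i.1 : V) := by
    intro i
    rw [hb'def, Module.Basis.unitsSMul_apply, hudef, hb i]
    simp [coroot, Units.smul_def]
  have hcc := coroot_coords B hsymm hpos hRS hred hcrys hirr hbase hd2 b hb b' hb' hγ₀ hm hmin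
  set Q := corootLattice B Δ with hQdef
  have hgenQ : ∀ i : ↥Pi, b' i ∈ Q := by
    intro i
    rw [hQdef]
    unfold corootLattice
    exact AddSubgroup.subset_closure ⟨i.1, hPiΔ i, (hb' i).symm⟩
  set Q1 := AddSubgroup.closure (coroot B '' {β | IsShort B Δ β}) with hQ1def
  have hshortQ1 : ∀ z : V, IsShort B Δ z → coroot B z ∈ Q1 := by
    intro z hz
    rw [hQ1def]
    exact AddSubgroup.subset_closure ⟨z, hz, rfl⟩
  set T := (2 : ℚ) • Q with hTdef
  set P := Q1 ⊔ T with hPdef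
  -- decomposition of any vector along the basis b'
  have hsum_repr : ∀ x : V, x = ∑ i ∈ (b'.repr x).support, (b'.repr x i) • b' i := by
    intro x
    have h2 := b'.linearCombination_repr x
    rw [Finsupp.linearCombination_apply, Finsupp.sum] at h2
    exact h2.symm
  -- integer coordinates of elements of Q
  have hQint : ∀ x ∈ Q, ∀ i : ↥Pi, ∃ n : ℤ, b'.repr x i = n := by
    intro x hx
    induction hx using AddSubgroup.closure_induction with
    | mem y hy =>
      obtain ⟨α, hα, rfl⟩ := hy
      intro i
      obtain ⟨n, hn, -⟩ := hcc α hα i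
      exact ⟨n, hn⟩
    | zero => intro i; exact ⟨0, by simp⟩
    | add x y hx hy ihx ihy =>
      intro i
      obtain ⟨n1, hn1⟩ := ihx i
      obtain ⟨n2, hn2⟩ := ihy i
      exact ⟨n1 + n2, by rw [map_add, Finsupp.add_apply, hn1, hn2]; push_cast; ring⟩
    | neg x hx ihx =>
      intro i
      obtain ⟨n, hn⟩ := ihx i
      exact ⟨-n, by rw [map_neg, Finsupp.neg_apply, hn]; push_cast; ring⟩
  have hQof : ∀ x : V, (∀ i : ↥Pi, ∃ n : ℤ, b'.repr x i = n) → x ∈ Q := by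
    intro x hx
    rw [hsum_repr x]
    refine AddSubgroup.sum_mem _ (fun i _ => ?_)
    obtain ⟨n, hn⟩ := hx i
    rw [hn, Int.cast_smul_eq_zsmul]
    exact zsmul_mem (hgenQ i) n
  -- membership characterisation for T = 2Q
  have hTiff : ∀ x : V, x ∈ T ↔ ∀ i : ↥Pi, ∃ n : ℤ, b'.repr x i = 2 * n := by
    intro x
    constructor
    · intro hx i
      obtain ⟨w, hw, rfl⟩ := (AddSubgroup.mem_smul_pointwise_iff_exists _ _ _).mp hx
      obtain ⟨n, hn⟩ := hQint w hw i
      exact ⟨n, by rw [map_smul, Finsupp.smul_apply, smul_eq_mul, hn]; try push_cast; try ring⟩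
    · intro hx
      refine (AddSubgroup.mem_smul_pointwise_iff_exists _ _ _).mpr
        ⟨(2:ℚ)⁻¹ • x, hQof _ (fun i => ?_), smul_inv_smul₀ two_ne_zero x⟩
      obtain ⟨n, hn⟩ := hx i
      exact ⟨n, by rw [map_smul, Finsupp.smul_apply, smul_eq_mul, hn]; try push_cast; try ring⟩
  -- coordinates of elements of Q1
  have hQ1coords : ∀ y ∈ Q1, ∀ i : ↥Pi, ∃ n : ℤ, b'.repr y i = n ∧
      (B i.1 i.1 ≠ m₀ → 2 ∣ n) := by
    intro y hy
    induction hy using AddSubgroup.closure_induction with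
    | mem z hz =>
      obtain ⟨β, hβ, rfl⟩ := hz
      intro i
      obtain ⟨n, hn, hpar⟩ := hcc β ((hshort_iff β).mp hβ).1 i
      exact ⟨n, hn, hpar ((hshort_iff β).mp hβ).2⟩
    | zero => intro i; exact ⟨0, by simp, fun _ => dvd_zero 2⟩
    | add x y hx hy ihx ihy =>
      intro i
      obtain ⟨n1, hn1, hp1⟩ := ihx i
      obtain ⟨n2, hn2, hp2⟩ := ihy i
      refine ⟨n1 + n2, by rw [map_add, Finsupp.add_apply, hn1, hn2]; push_cast; ring, ?_⟩
      intro hl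
      exact dvd_add (hp1 hl) (hp2 hl)
    | neg x hx ihx =>
      intro i
      obtain ⟨n, hn, hp⟩ := ihx i
      refine ⟨-n, by rw [map_neg, Finsupp.neg_apply, hn]; push_cast; ring, ?_⟩
      intro hl
      exact dvd_neg.mpr (hp hl)
  -- coordinates of elements of P
  have hPcoords : ∀ x ∈ P, ∀ i : ↥Pi, ∃ n : ℤ, b'.repr x i = n ∧
      (B i.1 i.1 ≠ m₀ → 2 ∣ n) := by
    intro x hx i
    rw [hPdef, AddSubgroup.mem_sup] at hx
    obtain ⟨y, hy, z, hz, rfl⟩ := hx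
    obtain ⟨n1, hn1, hp1⟩ := hQ1coords y hy i
    obtain ⟨n2, hn2⟩ := (hTiff z).mp hz i
    refine ⟨n1 + 2 * n2, by rw [map_add, Finsupp.add_apply, hn1, hn2]; push_cast; ring, ?_⟩
    intro hl
    exact dvd_add (hp1 hl) ⟨n2, rfl⟩
  -- reverse inclusion into P
  have hPof : ∀ x : V, (∀ i : ↥Pi, ∃ n : ℤ, b'.repr x i = n ∧
      (B i.1 i.1 ≠ m₀ → 2 ∣ n)) → x ∈ P := by
    intro x hx
    rw [hsum_repr x]
    refine AddSubgroup.sum_mem _ (fun i _ => ?_)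
    obtain ⟨n, hn, hpar⟩ := hx i
    by_cases hs : B i.1 i.1 = m₀
    · apply AddSubgroup.mem_sup_left
      rw [hn, Int.cast_smul_eq_zsmul]
      refine zsmul_mem ?_ n
      rw [hb' i]
      exact hshortQ1 i.1 ((hshort_iff _).mpr ⟨hPiΔ i, hs⟩)
    · obtain ⟨k, rfl⟩ := hpar hs
      apply AddSubgroup.mem_sup_right
      rw [hn, show ((2 * k : ℤ) : ℚ) = (2 : ℚ) * ((k : ℤ) : ℚ) by push_cast; ring, mul_smul]
      refine AddSubgroup.smul_mem_pointwise_smul _ _ _ ?_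
      rw [Int.cast_smul_eq_zsmul]
      exact zsmul_mem (hgenQ i) k
  -- P is contained in Q
  have hTQ : T ≤ Q := by
    intro x hx
    obtain ⟨y, hy, rfl⟩ := (AddSubgroup.mem_smul_pointwise_iff_exists _ _ _).mp hx
    rw [two_smul]
    exact add_mem hy hy
  have hQ1Q : Q1 ≤ Q := by
    rw [hQ1def, hQdef, corootLattice]
    exact AddSubgroup.closure_mono (Set.image_mono (fun β hβ => hβ.1))
  have hPQ : P ≤ Q := sup_le hQ1Q hTQ
  constructor
  · -- elementary abelian 2-group property
    intro x hx
    rw [← two_smul ℚ x]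
    exact AddSubgroup.smul_mem_pointwise_smul x 2 Q (hPQ hx)
  -- index computation
  set Sset := Pi ∩ {β | IsShort B Δ β} with hSdef
  have hSfin : Sset.Finite := hRS.1.subset (fun x hx => hbase.1 hx.1)
  letI : Fintype ↥Sset := hSfin.fintype
  have hnumadd : ∀ (q r : ℚ), (∃ a : ℤ, q = a) → (∃ c : ℤ, r = c) →
      (q + r).num = q.num + r.num := by
    rintro q r ⟨a, rfl⟩ ⟨c, rfl⟩
    rw [← Int.cast_add, Rat.num_intCast, Rat.num_intCast, Rat.num_intCast]
  set Φ : ↥P →+ (↥Sset → ZMod 2) :=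
    { toFun := fun x s => (((b'.repr (x : V)) ⟨s.1, s.2.1⟩).num : ZMod 2)
      map_zero' := by funext s; simp
      map_add' := by
        intro x y
        funext s
        obtain ⟨n1, hn1, -⟩ := hPcoords x x.2 ⟨s.1, s.2.1⟩
        obtain ⟨n2, hn2, -⟩ := hPcoords y y.2 ⟨s.1, s.2.1⟩
        show (((b'.repr ((x : V) + (y : V))) ⟨s.1, s.2.1⟩).num : ZMod 2) = _
        rw [map_add, Finsupp.add_apply, hnumadd _ _ ⟨n1, hn1⟩ ⟨n2, hn2⟩, Int.cast_add]
        rfl } with hΦdef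
  have hΦapply : ∀ (x : ↥P) (s : ↥Sset),
      Φ x s = (((b'.repr (x : V)) ⟨s.1, s.2.1⟩).num : ZMod 2) := fun x s => rfl
  -- surjectivity
  have hΦsingle : ∀ s : ↥Sset, ∃ x : ↥P, Φ x = _root_.Pi.single s 1 := by
    intro s
    have hmem : coroot B (s : V) ∈ P := by
      apply AddSubgroup.mem_sup_left
      exact hshortQ1 (s : V) s.2.2
    refine ⟨⟨coroot B (s : V), hmem⟩, ?_⟩
    funext t
    rw [hΦapply]
    show (((b'.repr (coroot B (s : V))) ⟨t.1, t.2.1⟩).num : ZMod 2) = _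
    rw [show coroot B (s : V) = b' ⟨s.1, s.2.1⟩ from (hb' ⟨s.1, s.2.1⟩).symm,
      b'.repr_self, Finsupp.single_apply, _root_.Pi.single_apply]
    by_cases h : t = s
    · subst h
      rw [if_pos rfl, if_pos rfl]
      norm_num
    · have h2 : (⟨s.1, s.2.1⟩ : ↥Pi) ≠ ⟨t.1, t.2.1⟩ := by
        intro hc
        exact h (Subtype.ext (congrArg Subtype.val hc).symm)
      rw [if_neg h2, if_neg h]
      norm_num
  have hsurj : Function.Surjective Φ := by
    intro f
    choose g hg using hΦsingle
    refine ⟨∑ s ∈ Finset.univ.filter (fun s => f s = 1), g s, ?_⟩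
    rw [map_sum]
    funext t
    rw [Finset.sum_apply]
    simp only [hg]
    rw [show (∑ s ∈ Finset.univ.filter (fun s => f s = 1), _root_.Pi.single s (1 : ZMod 2) t)
        = ∑ s ∈ Finset.univ.filter (fun s => f s = 1), if t = s then (1 : ZMod 2) else 0 by
      refine Finset.sum_congr rfl (fun s _ => ?_); rw [_root_.Pi.single_apply]]
    rw [Finset.sum_ite_eq]
    have h01 : ∀ a : ZMod 2, a = 0 ∨ a = 1 := by decide
    rcases h01 (f t) with h | h <;> simp [h]
  -- kernel identification
  have hker : Φ.ker = T.addSubgroupOf P := by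
    ext x
    rw [AddMonoidHom.mem_ker, AddSubgroup.mem_addSubgroupOf]
    constructor
    · intro hx
      refine (hTiff _).mpr (fun i => ?_)
      obtain ⟨n, hn, hpar⟩ := hPcoords x x.2 i
      by_cases hs : B i.1 i.1 = m₀
      · have hsS : (i : V) ∈ Sset := ⟨i.2, (hshort_iff _).mpr ⟨hPiΔ i, hs⟩⟩
        have h3 : Φ x ⟨(i : V), hsS⟩ = 0 := by rw [hx]; rfl
        have h4 : (((b'.repr (x : V)) i).num : ZMod 2) = 0 := h3
        rw [hn, Rat.num_intCast] at h4
        have h5 : (2 : ℤ) ∣ n := by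
          have := (ZMod.intCast_zmod_eq_zero_iff_dvd n 2).mp h4
          exact_mod_cast this
        obtain ⟨k, rfl⟩ := h5
        exact ⟨k, by rw [hn]; push_cast; ring⟩
      · obtain ⟨k, rfl⟩ := hpar hs
        exact ⟨k, by rw [hn]; push_cast; ring⟩
    · intro hx
      funext s
      rw [hΦapply]
      obtain ⟨n, hn⟩ := (hTiff _).mp hx ⟨s.1, s.2.1⟩
      rw [hn, show (2 : ℚ) * n = ((2 * n : ℤ) : ℚ) by push_cast; ring, Rat.num_intCast]
      show ((2 * n : ℤ) : ZMod 2) = 0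
      rw [ZMod.intCast_zmod_eq_zero_iff_dvd]
      exact Dvd.dvd.mul_right (by norm_num) n
  -- conclusion
  have e1 : T.relIndex P = (T.addSubgroupOf P).index := rfl
  rw [e1, ← hker, AddSubgroup.index_eq_card,
    Nat.card_congr (QuotientAddGroup.quotientKerEquivOfSurjective Φ hsurj).toEquiv,
    Nat.card_fun, Nat.card_zmod, Nat.card_coe_set_eq]

end ZetaCenter
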